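/- Let S = ⟨a_1,…,a_n⟩ ⊆ ℤ^m ⊕ T be a reduced monoid. Then the cardinality of S ∖ L_S equals dim_K( K[x_1,…,x_n] / (I_S + in_≺(I_{S̃})) ), where in_≺(I_{S̃}) is the initial ideal of I_{S̃} with respect to any monomial order ≺. -/

import Mathlib

open MvPolynomial

/-- The `S`-degree of an exponent vector. -/
def degS {n : ℕ} {G : Type*} [AddCommMonoid G] (a : Fin n → G) (lam : Fin n → ℕ) : G :=
  ∑ i, lam i • a i

/-- The lattice ideal of the monoid generated by `a`. -/
noncomputable def latticeIdeal (K : Type) [Field K] {n : ℕ} {G : Type*} [AddCommMonoid G]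
    (a : Fin n → G) : Ideal (MvPolynomial (Fin n) K) :=
  Ideal.span {f | ∃ α β : Fin n →₀ ℕ, degS a ⇑α = degS a ⇑β ∧
    f = monomial α (1 : K) - monomial β 1}

/-- The set of elements of `S = ⟨a_1,…,a_n⟩` having at least two different factorizations
of the same length. -/
def LSet {n : ℕ} {G : Type*} [AddCommMonoid G] (a : Fin n → G) : Set G :=
  {x | ∃ lam nu : Fin n → ℕ, lam ≠ nu ∧ degS a lam = x ∧ degS a nu = x ∧
    ∑ i, lam i = ∑ i, nu i}

/-- The initial ideal of `J` with respect to a monomial order `mo`: the ideal generated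
by the leading monomials of the nonzero elements of `J`. -/
noncomputable def initialIdeal {n : ℕ} (K : Type) [Field K] (mo : MonomialOrder (Fin n))
    (J : Ideal (MvPolynomial (Fin n) K)) : Ideal (MvPolynomial (Fin n) K) :=
  Ideal.span {g | ∃ f ∈ J, f ≠ 0 ∧ ∃ d ∈ f.support,
    (∀ e ∈ f.support, mo.toSyn e ≤ mo.toSyn d) ∧ g = monomial d (1 : K)}

noncomputable section Aux
open scoped Classical

variable {K : Type} [Field K] {n : ℕ} {G : Type*} [AddCommMonoid G]

lemma degS_add (a : Fin n → G) (lam nu : Fin n → ℕ) :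
    degS a (lam + nu) = degS a lam + degS a nu := by
  simp [degS, add_smul, Finset.sum_add_distrib]

lemma binomial_mem (a : Fin n → G) {α β : Fin n →₀ ℕ} (h : degS a ⇑α = degS a ⇑β) :
    (monomial α (1 : K) - monomial β 1) ∈ latticeIdeal K a :=
  Ideal.subset_span ⟨α, β, h, rfl⟩

lemma degS_mem_closure (a : Fin n → G) (lam : Fin n → ℕ) :
    degS a lam ∈ AddSubmonoid.closure (Set.range a) :=
  AddSubmonoid.sum_mem _ fun i _ =>
    AddSubmonoid.nsmul_mem _ (AddSubmonoid.subset_closure (Set.mem_range_self i)) _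

lemma exists_degS (a : Fin n → G) {x : G}
    (hx : x ∈ AddSubmonoid.closure (Set.range a)) : ∃ lam, degS a lam = x := by
  induction hx using AddSubmonoid.closure_induction with
  | mem x hx =>
      obtain ⟨i, rfl⟩ := hx
      refine ⟨fun j => if j = i then 1 else 0, ?_⟩
      simp [degS, ite_smul]
  | zero => exact ⟨0, by simp [degS]⟩
  | add x y _ _ hx hy =>
      obtain ⟨lam, rfl⟩ := hx
      obtain ⟨nu, rfl⟩ := hy
      exact ⟨lam + nu, degS_add a lam nu⟩

/-- The algebra map sending `x_i` to `t^{a_i}` in the monoid algebra of `G`. -/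
def psiHom (K : Type) [Field K] {n : ℕ} {G : Type*} [AddCommMonoid G] (a : Fin n → G) :
    MvPolynomial (Fin n) K →ₐ[K] AddMonoidAlgebra K G :=
  aeval fun i => AddMonoidAlgebra.single (a i) 1

lemma psi_monomial (a : Fin n → G) (α : Fin n →₀ ℕ) (c : K) :
    psiHom K a (monomial α c) = AddMonoidAlgebra.single (degS a ⇑α) c := by
  rw [psiHom, aeval_monomial]
  have h1 : (α.prod fun i k => (AddMonoidAlgebra.single (a i) (1 : K)) ^ k)
      = ∏ i, (AddMonoidAlgebra.single (a i) (1 : K)) ^ (α i) :=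
    Finsupp.prod_fintype _ _ (fun i => pow_zero _)
  rw [h1]
  have h2 : ∀ i : Fin n, (AddMonoidAlgebra.single (a i) (1 : K)) ^ (α i)
      = AddMonoidAlgebra.single (α i • a i) 1 := fun i => by
    rw [AddMonoidAlgebra.single_pow, one_pow]
  rw [Finset.prod_congr rfl fun i _ => h2 i, AddMonoidAlgebra.prod_single,
    Finset.prod_const_one]
  rw [AddMonoidAlgebra.coe_algebraMap]
  show AddMonoidAlgebra.single 0 (algebraMap K K c) * _ = _
  rw [AddMonoidAlgebra.single_mul_single, zero_add, mul_one]
  rfl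

lemma psi_apply (a : Fin n → G) (f : MvPolynomial (Fin n) K) (b : G) :
    (psiHom K a f).coeff b = ∑ α ∈ f.support, if degS a ⇑α = b then coeff α f else 0 := by
  conv_lhs => rw [f.as_sum, map_sum]
  rw [AddMonoidAlgebra.coeff_sum, Finsupp.finset_sum_apply]
  exact Finset.sum_congr rfl fun α _ => by rw [psi_monomial, AddMonoidAlgebra.coeff_single, Finsupp.single_apply]

lemma psi_supported (a : Fin n → G) (f : MvPolynomial (Fin n) K) (b : G)
    (h : (psiHom K a f).coeff b ≠ 0) : b ∈ AddSubmonoid.closure (Set.range a) := by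
  rw [psi_apply] at h
  obtain ⟨α, hα, hne⟩ := Finset.exists_ne_zero_of_sum_ne_zero h
  by_cases hd : degS a ⇑α = b
  · exact hd ▸ degS_mem_closure a ⇑α
  · simp [hd] at hne

lemma lattice_le_ker (a : Fin n → G) {f : MvPolynomial (Fin n) K}
    (hf : f ∈ latticeIdeal K a) : psiHom K a f = 0 := by
  have h : latticeIdeal K a ≤ RingHom.ker (psiHom K a).toRingHom := by
    rw [latticeIdeal, Ideal.span_le]
    rintro g ⟨α, β, hdeg, rfl⟩
    have : psiHom K a (monomial α (1 : K) - monomial β 1) = 0 := by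
      rw [map_sub, psi_monomial, psi_monomial, hdeg, sub_self]
    simpa [RingHom.mem_ker] using this
  exact h hf

lemma degS_pair (a : Fin n → G) (lam : Fin n → ℕ) :
    degS (fun j => ((a j, (1 : ℤ)) : G × ℤ)) lam
      = (degS a lam, ((∑ i, lam i : ℕ) : ℤ)) := by
  unfold degS
  rw [Nat.cast_sum, prod_mk_sum]
  exact Finset.sum_congr rfl fun i _ => by
    rw [Prod.smul_mk]
    simp

lemma degS_mem_LSet {G : Type*} [AddCommMonoid G] (a : Fin n → G)
    {f : MvPolynomial (Fin n) K}
    (hf : f ∈ latticeIdeal K (fun j => ((a j, (1 : ℤ)) : G × ℤ)))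
    {d : Fin n →₀ ℕ} (hd : d ∈ f.support) : degS a ⇑d ∈ LSet a := by
  set aT := fun j => ((a j, (1 : ℤ)) : G × ℤ) with haT
  have hψ : psiHom K aT f = 0 := lattice_le_ker aT hf
  have h0 : (psiHom K aT f).coeff (degS aT ⇑d) = 0 := by rw [hψ]; rfl
  rw [psi_apply] at h0
  have hex : ∃ α ∈ f.support, α ≠ d ∧ degS aT ⇑α = degS aT ⇑d := by
    by_contra hno
    push_neg at hno
    rw [Finset.sum_eq_single_of_mem d hd
      (fun α hα hαd => by simp [hno α hα hαd])] at h0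
    simp at h0
    exact (mem_support_iff.mp hd) h0
  obtain ⟨α, _, hαd, hdeg⟩ := hex
  rw [haT] at hdeg
  rw [degS_pair, degS_pair, Prod.ext_iff] at hdeg
  have h1 := hdeg.1
  have h2 := hdeg.2
  dsimp only at h1 h2
  refine ⟨⇑α, ⇑d, fun h => hαd (DFunLike.coe_injective h), h1, rfl, ?_⟩
  exact_mod_cast h2

lemma LSet_absorb (a : Fin n → G) {b : G} (hb : b ∈ LSet a) (gam : Fin n → ℕ) :
    degS a gam + b ∈ LSet a := by
  obtain ⟨lam, nu, hne, hl, hn, hlen⟩ := hb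
  refine ⟨gam + lam, gam + nu, ?_, ?_, ?_, ?_⟩
  · intro h
    apply hne
    funext i
    have := congrFun h i
    simpa using this
  · rw [degS_add, hl]
  · rw [degS_add, hn]
  · simp [Finset.sum_add_distrib, hlen]

lemma mono_mem_initial {G' : Type*} [AddCommMonoid G'] (c : Fin n → G')
    (mo : MonomialOrder (Fin n)) {μ ν : Fin n →₀ ℕ}
    (hne : μ ≠ ν) (hdeg : degS c ⇑μ = degS c ⇑ν) (hle : mo.toSyn ν ≤ mo.toSyn μ) :
    (monomial μ (1 : K)) ∈ initialIdeal K mo (latticeIdeal K c) := by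
  set f : MvPolynomial (Fin n) K := monomial μ (1 : K) - monomial ν 1 with hfdef
  have hcμ : coeff μ f = 1 := by
    simp [hfdef, coeff_monomial, Ne.symm hne]
  have hsupp : ∀ e ∈ f.support, e = μ ∨ e = ν := by
    intro e he
    rw [mem_support_iff] at he
    by_contra hcon
    push_neg at hcon
    simp [hfdef, coeff_monomial, Ne.symm hcon.1, Ne.symm hcon.2] at he
  apply Ideal.subset_span
  refine ⟨f, binomial_mem c hdeg, ?_, μ, ?_, ?_, rfl⟩
  · intro h
    rw [h] at hcμ
    simp at hcμ
  · rw [mem_support_iff, hcμ]; exact one_ne_zero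
  · intro e he
    rcases hsupp e he with rfl | rfl
    · exact le_refl _
    · exact hle

lemma mono_mem_J {G : Type*} [AddCommMonoid G] (a : Fin n → G)
    (mo : MonomialOrder (Fin n)) {α : Fin n →₀ ℕ}
    (hα : degS a ⇑α ∈ LSet a) (c : K) :
    monomial α c ∈ latticeIdeal K a + initialIdeal K mo
      (latticeIdeal K (fun j => ((a j, (1 : ℤ)) : G × ℤ))) := by
  rw [Submodule.add_eq_sup]
  obtain ⟨lam, nu, hne, hl, hn, hlen⟩ := hα
  set μ : Fin n →₀ ℕ := Finsupp.equivFunOnFinite.symm lam with hμdef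
  set ν : Fin n →₀ ℕ := Finsupp.equivFunOnFinite.symm nu with hνdef
  have hμ : ⇑μ = lam := rfl
  have hν : ⇑ν = nu := rfl
  have hμν : μ ≠ ν := by
    intro h
    exact hne (by rw [← hμ, ← hν, h])
  set aT := fun j => ((a j, (1 : ℤ)) : G × ℤ) with haT
  have hdegt : degS aT ⇑μ = degS aT ⇑ν := by
    rw [haT, degS_pair, degS_pair, hμ, hν, hl.trans hn.symm, hlen]
  have key : ∀ ρ : Fin n →₀ ℕ, degS a ⇑ρ = degS a ⇑α →
      (monomial ρ (1 : K)) ∈ initialIdeal K mo (latticeIdeal K aT) →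
      monomial α c ∈ latticeIdeal K a ⊔ initialIdeal K mo (latticeIdeal K aT) := by
    intro ρ hρ hmem
    have hsplit : monomial α c
        = c • (monomial α (1 : K) - monomial ρ 1) + c • monomial ρ 1 := by
      rw [smul_sub, sub_add_cancel, smul_monomial, smul_eq_mul, mul_one]
    rw [hsplit]
    refine Submodule.add_mem _ ?_ ?_
    · exact Submodule.mem_sup_left
        (Submodule.smul_of_tower_mem (latticeIdeal K a) c (binomial_mem a hρ.symm))
    · exact Submodule.mem_sup_right
        (Submodule.smul_of_tower_mem (initialIdeal K mo (latticeIdeal K aT)) c hmem)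
  rcases le_total (mo.toSyn μ) (mo.toSyn ν) with h | h
  · exact key ν (by rw [hν]; exact hn) (mono_mem_initial aT mo hμν.symm hdegt.symm h)
  · exact key μ (by rw [hμ]; exact hl) (mono_mem_initial aT mo hμν hdegt h)

lemma homog_mem (a : Fin n → G) (A : Finset (Fin n →₀ ℕ)) (c : (Fin n →₀ ℕ) → K) (b : G)
    (hb : ∀ α ∈ A, degS a ⇑α = b) (h0 : ∑ α ∈ A, c α = 0) :
    ∑ α ∈ A, (monomial α (c α) : MvPolynomial (Fin n) K) ∈ latticeIdeal K a := by
  rcases A.eq_empty_or_nonempty with rfl | ⟨α₀, hα₀⟩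
  · simp
  have key : ∑ α ∈ A, (monomial α (c α) : MvPolynomial (Fin n) K)
      = ∑ α ∈ A, c α • (monomial α (1 : K) - monomial α₀ 1) := by
    have : ∀ α ∈ A, c α • ((monomial α (1 : K)) - monomial α₀ 1)
        = monomial α (c α) - c α • monomial α₀ (1 : K) := by
      intro α _
      rw [smul_sub, smul_monomial, smul_eq_mul, mul_one]
    rw [Finset.sum_congr rfl this, Finset.sum_sub_distrib, ← Finset.sum_smul, h0,
      zero_smul, sub_zero]
  rw [key]
  exact Submodule.sum_mem _ fun α hα => Submodule.smul_of_tower_mem _ _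
    (binomial_mem a ((hb α hα).trans (hb α₀ hα₀).symm))

/-- Multiplication preserves the vanishing property. -/
lemma mul_Q {G : Type*} [AddCommGroup G] (a : Fin n → G)
    (r f : MvPolynomial (Fin n) K)
    (hf : ∀ b ∉ LSet a, (psiHom K a f).coeff b = 0) :
    ∀ b ∉ LSet a, (psiHom K a (r * f)).coeff b = 0 := by
  induction r using MvPolynomial.induction_on' with
  | monomial γ cc =>
      intro b hb
      rw [map_mul, psi_monomial]
      rw [AddMonoidAlgebra.coeff_single_mul_apply]
      have hzero : (psiHom K a f).coeff (-(degS a ⇑γ) + b) = 0 := by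
        apply hf
        intro hL
        apply hb
        have := LSet_absorb a hL ⇑γ
        rwa [add_neg_cancel_left] at this
      rw [hzero, mul_zero]
  | add p q hp hq =>
      intro b hb
      rw [add_mul, map_add]
      show (psiHom K a (p * f)).coeff b + (psiHom K a (q * f)).coeff b = 0
      rw [hp b hb, hq b hb, add_zero]

end Aux

/-- **Corollary.** Let `S = ⟨a_1,…,a_n⟩ ⊆ ℤ^m ⊕ T` be a reduced monoid.  Then
`#(S \ L_S) = dim_K K[x_1,…,x_n]/(I_S + in_≺(I_{S̃}))` for any monomial order `≺`. -/
theorem card_compl_LSet_eq_rank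
    {m n : ℕ} {T : Type} [AddCommGroup T] [Fintype T]
    (K : Type) [Field K]
    (a : Fin n → (Fin m → ℤ) × T)
    -- `S` is reduced:
    (hred : ∀ x, x ∈ AddSubmonoid.closure (Set.range a) →
      -x ∈ AddSubmonoid.closure (Set.range a) → x = 0)
    -- `a` is the minimal set of generators:
    (hmin : ∀ i, a i ∉ AddSubmonoid.closure (Set.range a \ {a i}))
    -- any monomial order:
    (mo : MonomialOrder (Fin n)) :
    Cardinal.mk ((AddSubmonoid.closure (Set.range a) : Set ((Fin m → ℤ) × T)) \ LSet a :
        Set ((Fin m → ℤ) × T)) =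
      Module.rank K (MvPolynomial (Fin n) K ⧸
        (latticeIdeal K a + initialIdeal K mo
          (latticeIdeal K (fun j => ((a j, (1 : ℤ)) : ((Fin m → ℤ) × T) × ℤ))))) := by
  classical
  let G := (Fin m → ℤ) × T
  set J : Ideal (MvPolynomial (Fin n) K) :=
    latticeIdeal K a + initialIdeal K mo
      (latticeIdeal K (fun j => ((a j, (1 : ℤ)) : G × ℤ))) with hJ
  set Dset : Set G := (AddSubmonoid.closure (Set.range a) : Set G) \ LSet a with hD
  -- the linear map
  set Φ : MvPolynomial (Fin n) K →ₗ[K] (↥Dset →₀ K) :=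
    (Finsupp.lsubtypeDomain (R := K) (M := K) Dset).comp
      ((AddMonoidAlgebra.coeffLinearEquiv K).toLinearMap.comp (psiHom K a).toLinearMap) with hΦ
  have Φ_apply : ∀ f : MvPolynomial (Fin n) K,
      Φ f = Finsupp.subtypeDomain (fun x => x ∈ Dset) (psiHom K a f).coeff := fun f => rfl
  -- Q f ↔ Φ f = 0
  have hQiff : ∀ f : MvPolynomial (Fin n) K,
      Φ f = 0 ↔ ∀ b ∉ LSet a, (psiHom K a f).coeff b = 0 := by
    intro f
    rw [Φ_apply, Finsupp.subtypeDomain_eq_zero_iff']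
    constructor
    · intro h b hb
      by_cases hc : b ∈ AddSubmonoid.closure (Set.range a)
      · exact h b ⟨hc, hb⟩
      · by_contra hne
        exact hc (psi_supported a f b hne)
    · intro h b hb
      exact h b hb.2
  -- kernel = J
  have hker : LinearMap.ker Φ = Submodule.restrictScalars K J := by
    ext f
    rw [LinearMap.mem_ker, Submodule.restrictScalars_mem, hQiff]
    constructor
    · -- vanishing ⇒ mem J
      intro hQ
      have hf : f = ∑ b ∈ f.support.image (fun α : Fin n →₀ ℕ => degS a ⇑α),
          ∑ α ∈ f.support.filter (fun α : Fin n →₀ ℕ => degS a ⇑α = b), monomial α (coeff α f) := by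
        rw [Finset.sum_fiberwise_of_maps_to (fun α hα => Finset.mem_image_of_mem _ hα)]
        exact f.as_sum
      rw [hf, hJ, Submodule.add_eq_sup]
      apply Submodule.sum_mem
      intro b _
      by_cases hbL : b ∈ LSet a
      · apply Submodule.sum_mem
        intro α hα
        have hdα : degS a ⇑α = b := by
          simpa using (Finset.mem_filter.mp hα).2
        have := mono_mem_J (K := K) a mo (hdα ▸ hbL) (coeff α f)
        rwa [Submodule.add_eq_sup] at this
      · have h0 : ∑ α ∈ f.support.filter (fun α : Fin n →₀ ℕ => degS a ⇑α = b), coeff α f = 0 := by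
          have hv := hQ b hbL
          rw [psi_apply] at hv
          refine (Finset.sum_filter _ _).trans (Eq.trans ?_ hv)
          exact Finset.sum_congr rfl fun α _ => by split_ifs <;> rfl
        exact Submodule.mem_sup_left
          (homog_mem a _ _ b (fun α hα => by simpa using (Finset.mem_filter.mp hα).2) h0)
    · -- mem J ⇒ vanishing
      intro hfJ
      have hsup : f ∈ latticeIdeal K a ⊔ initialIdeal K mo
          (latticeIdeal K (fun j => ((a j, (1 : ℤ)) : G × ℤ))) := hfJ
      obtain ⟨y, hy, z, hz, rfl⟩ := Submodule.mem_sup.mp hsup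
      have hQy : ∀ b ∉ LSet a, (psiHom K a y).coeff b = 0 := by
        have : ∀ g ∈ latticeIdeal K a, ∀ b ∉ LSet a, (psiHom K a g).coeff b = 0 := by
          intro g hg b _
          rw [lattice_le_ker a hg]
          rfl
        exact this y hy
      have hQz : ∀ b ∉ LSet a, (psiHom K a z).coeff b = 0 := by
        clear hfJ hsup
        rw [initialIdeal] at hz
        induction hz using Submodule.span_induction with
        | mem g hg =>
            obtain ⟨f₀, hf₀, _, d, hd, _, rfl⟩ := hg
            intro b hb
            rw [psi_monomial, AddMonoidAlgebra.coeff_single, Finsupp.single_apply_eq_zero]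
            intro hbd
            exact absurd (hbd ▸ degS_mem_LSet a hf₀ hd) hb
        | zero => intro b _; rfl
        | add p q _ _ hp hq =>
            intro b hb
            rw [map_add]
            show (psiHom K a p).coeff b + (psiHom K a q).coeff b = 0
            rw [hp b hb, hq b hb, add_zero]
        | smul r g _ hg =>
            intro b hb
            rw [smul_eq_mul]
            exact mul_Q a r g hg b hb
      intro b hb
      rw [map_add]
      show (psiHom K a y).coeff b + (psiHom K a z).coeff b = 0
      rw [hQy b hb, hQz b hb, add_zero]
  -- surjectivity
  have hsurj : Function.Surjective Φ := by
    intro g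
    induction g using Finsupp.induction with
    | zero => exact ⟨0, map_zero Φ⟩
    | single_add d k g _ _ ih =>
        obtain ⟨p, hp⟩ := ih
        obtain ⟨lam, hlam⟩ := exists_degS a d.2.1
        refine ⟨monomial (Finsupp.equivFunOnFinite.symm lam) k + p, ?_⟩
        rw [map_add, hp]
        congr 1
        rw [Φ_apply, psi_monomial]
        ext x
        rw [Finsupp.subtypeDomain_apply]
        have hcoe : ⇑(Finsupp.equivFunOnFinite.symm lam) = lam := rfl
        rw [hcoe, hlam]
        rw [AddMonoidAlgebra.coeff_single, Finsupp.single_apply, Finsupp.single_apply]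
        by_cases hx : d = x
        · simp [hx, Subtype.ext_iff]
        · have : ¬ (↑d : G) = ↑x := fun h => hx (Subtype.ext h)
          simp [hx, this]
  -- assemble
  have e1 : (MvPolynomial (Fin n) K ⧸ LinearMap.ker Φ) ≃ₗ[K] (↥Dset →₀ K) :=
    LinearMap.quotKerEquivOfSurjective Φ hsurj
  rw [hker] at e1
  have e2 : (MvPolynomial (Fin n) K ⧸ Submodule.restrictScalars K J) ≃ₗ[K]
      (MvPolynomial (Fin n) K ⧸ J) :=
    Submodule.Quotient.restrictScalarsEquiv K J
  calc Cardinal.mk ↥Dset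
      = Module.rank K (↥Dset →₀ K) :=
        (rank_finsupp_self' (R := K) (ι := ↥Dset)).symm
    _ = Module.rank K (MvPolynomial (Fin n) K ⧸ Submodule.restrictScalars K J) :=
        e1.symm.rank_eq
    _ = Module.rank K (MvPolynomial (Fin n) K ⧸ J) := e2.rank_eq
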